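/- Pointwise energy identity relating the Dirichlet-type energies, the least-squares quasi-conformal energy, and the area functional: for every μ ∈ ℂ with |μ| < 1 and all vectors a = (a₁, a₂), b = (b₁, b₂) ∈ ℝ², with P = P(μ) and J = [[0, −1], [1, 0]], one has (1/2)‖P·a‖² + (1/2)‖P·b‖² − (1/2)‖P·a + J·P·b‖² = a₁·b₂ − a₂·b₁. -/

import Mathlib

/-- The matrix `P(μ)` associated with a Beltrami coefficient `μ = ρ + iτ`. -/
noncomputable def Pmat (μ : ℂ) : Matrix (Fin 2) (Fin 2) ℝ :=
  (1 / Real.sqrt (1 - ‖μ‖ ^ 2)) •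
    !![1 - μ.re, -μ.im; -μ.im, 1 + μ.re]

/-- The matrix `J = [[0, −1], [1, 0]]`. -/
def Jmat : Matrix (Fin 2) (Fin 2) ℝ := !![0, -1; 1, 0]

/-- View a vector in `Fin 2 → ℝ` as an element of `ℝ²` with the Euclidean norm. -/
noncomputable def toE2 (w : Fin 2 → ℝ) : EuclideanSpace ℝ (Fin 2) := WithLp.toLp 2 w

lemma norm_sq_toE2 (w : Fin 2 → ℝ) : ‖toE2 w‖ ^ 2 = w 0 ^ 2 + w 1 ^ 2 := by
  rw [toE2, EuclideanSpace.norm_eq, Real.sq_sqrt (by positivity)]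
  simp [Fin.sum_univ_two, sq_abs]

/-- Pointwise energy identity relating the Dirichlet-type energies, the least-squares
quasi-conformal energy, and the area functional: for `|μ| < 1`, `P = P(μ)`,
`J = [[0,−1],[1,0]]` and all `a, b ∈ ℝ²`,
`(1/2)‖P·a‖² + (1/2)‖P·b‖² − (1/2)‖P·a + J·P·b‖² = a₁·b₂ − a₂·b₁`
(Euclidean norm on `ℝ²`). -/
theorem pointwise_energy_identity (μ : ℂ) (hμ : ‖μ‖ < 1) (a b : Fin 2 → ℝ) :
    (1 / 2) * ‖toE2 ((Pmat μ).mulVec a)‖ ^ 2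
      + (1 / 2) * ‖toE2 ((Pmat μ).mulVec b)‖ ^ 2
      - (1 / 2) * ‖toE2 ((Pmat μ).mulVec a + Jmat.mulVec ((Pmat μ).mulVec b))‖ ^ 2
      = a 0 * b 1 - a 1 * b 0 := by
  have habs : ‖μ‖ ^ 2 = μ.re ^ 2 + μ.im ^ 2 := by
    rw [Complex.sq_norm, Complex.normSq_apply]; ring
  have hpos : 0 < 1 - ‖μ‖ ^ 2 := by
    nlinarith [norm_nonneg μ]
  set s := Real.sqrt (1 - ‖μ‖ ^ 2) with hsdef
  have hs2 : s ^ 2 = 1 - μ.re ^ 2 - μ.im ^ 2 := by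
    rw [hsdef, Real.sq_sqrt hpos.le, habs]; ring
  have hsne : s ≠ 0 := by rw [hsdef]; positivity
  simp only [norm_sq_toE2, Pmat, Jmat, ← hsdef]
  simp only [Matrix.mulVec, Matrix.smul_apply, dotProduct, Fin.sum_univ_two,
    Pi.add_apply, Pi.smul_apply, smul_eq_mul, Matrix.cons_val', Matrix.cons_val_zero,
    Matrix.cons_val_one, Matrix.head_cons, Matrix.empty_val', Matrix.cons_val_fin_one,
    Matrix.head_fin_const, Matrix.of_apply]
  have hdet : ((1 - μ.re) * a 0 - μ.im * a 1) * ((1 + μ.re) * b 1 - μ.im * b 0)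
      - ((1 + μ.re) * a 1 - μ.im * a 0) * ((1 - μ.re) * b 0 - μ.im * b 1)
      = s ^ 2 * (a 0 * b 1 - a 1 * b 0) := by
    linear_combination (a 1 * b 0 - a 0 * b 1) * hs2
  have hinv : (1 / s) ^ 2 * s ^ 2 = 1 := by field_simp
  linear_combination (1 / s) ^ 2 * hdet + (a 0 * b 1 - a 1 * b 0) * hinv
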